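/- Splitting inequality for RM constants: Let n ≥ 3, X₁,…,X_{n+1} Banach spaces, ϖ an (n+1)-linear contraction, J ⊂ {1,…,n+1} with 1 ≤ #J ≤ n−2, v ∉ J, and write J = J₀ ∪ J₁ with J₀ ∩ J₁ = ∅ and J₁ ≠ ∅. For any K ∈ ℕ and elements e_{j,k} ∈ X_j (j ∈ J, k = 1,…,K): if J₀ ≠ ∅ then ‖{(e_{j,k})_{j∈J}}_{k=1}^K‖_{RM_v(ϖ,J)} ≤ ‖{(e_{j,k})_{j∈J₀}}_{k=1}^K‖_{RM_v(ϖ,J₀)} · ∏_{j∈J₁} ‖(e_{j,k})_{k=1}^K‖_{Rad(X_j)}; and if J₀ = ∅ then ‖{(e_{j,k})_{j∈J}}_{k=1}^K‖_{RM_v(ϖ,J)} ≤ ∏_{j∈J₁} ‖(e_{j,k})_{k=1}^K‖_{Rad(X_j)}. Here ‖{(e_{j,k})_{j∈J}}_{k=1}^K‖_{RM_v(ϖ,J)} denotes the RM constant of the finite indexed family, i.e. the supremum of |∑_{k=1}^K ϖ(e_{1,k},…,e_v,…,e_{n+1,k})| over all choices of e_{j,k} ∈ X_j for j ∉ J∪{v}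 with ‖(e_{j,k})_k‖_{Rad(X_j)} ≤ 1 and e_v ∈ X_v with ‖e_v‖ ≤ 1. -/

import Mathlib

open MeasureTheory
open scoped ENNReal NNReal BigOperators Classical

noncomputable section

namespace OVM

/-! ### Points and cubes in `ℝ^d` -/

abbrev Pt (d : ℕ) := Fin d → ℝ

structure Cube (d : ℕ) where
  x : Fin d → ℝ
  s : ℝ
  pos : 0 < s

namespace Cube

variable {d : ℕ}

def set (Q : Cube d) : Set (Pt d) := {p | ∀ i, Q.x i ≤ p i ∧ p i < Q.x i + Q.s}

def vol (Q : Cube d) : ℝ := Q.s ^ d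

def center (Q : Cube d) : Pt d := fun i => Q.x i + Q.s / 2

/-- The concentric dilate `CQ` with `C = 2√d + 1 ≥ 2√d`. -/
def dil (Q : Cube d) : Cube d :=
  ⟨fun i => Q.x i + Q.s / 2 - (2 * Real.sqrt d + 1) * Q.s / 2,
   (2 * Real.sqrt d + 1) * Q.s, by
     have h1 : (0:ℝ) < 2 * Real.sqrt d + 1 := by positivity
     exact mul_pos h1 Q.pos⟩

end Cube

/-! ### Dyadic grids: `D_ω = {2^{-k}([0,1)^d + m) + ∑_{2^{-j} < 2^{-k}} ω_j 2^{-j}}` -/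

def dyadicShiftVec {d : ℕ} (ω : ℤ → Fin d → Bool) (k : ℤ) : Pt d :=
  fun i => ∑' j : ℤ, if k < j ∧ ω j i = true then (2:ℝ) ^ (-j) else 0

def dyadicCube {d : ℕ} (ω : ℤ → Fin d → Bool) (k : ℤ) (m : Fin d → ℤ) : Cube d :=
  ⟨fun i => (m i : ℝ) * (2:ℝ) ^ (-k) + dyadicShiftVec ω k i, (2:ℝ) ^ (-k), by positivity⟩

def dyadicGrid {d : ℕ} (ω : ℤ → Fin d → Bool) : Set (Cube d) :=
  {Q | ∃ k m, Q = dyadicCube ω k m}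

def IsDyadicGrid {d : ℕ} (D : Set (Cube d)) : Prop := ∃ ω, D = dyadicGrid ω

def stdGrid (d : ℕ) : Set (Cube d) := dyadicGrid fun _ _ => false

/-- `IsAncestor K Q k` means `Q^{(k)} = K`, i.e. `K` is the `k`-th dyadic ancestor of `Q`. -/
def IsAncestor {d : ℕ} (K Q : Cube d) (k : ℕ) : Prop :=
  Q.set ⊆ K.set ∧ K.s = 2 ^ k * Q.s

/-- `Q'` is a dyadic child of `Q`. -/
def IsChild {d : ℕ} (Q' Q : Cube d) : Prop := IsAncestor Q Q' 1

/-! ### Haar functions -/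

def haar1 (a s : ℝ) (b : Bool) : ℝ → ℝ := fun t =>
  if b then
    (if a ≤ t ∧ t < a + s / 2 then (Real.sqrt s)⁻¹
     else if a + s / 2 ≤ t ∧ t < a + s then -(Real.sqrt s)⁻¹ else 0)
  else if a ≤ t ∧ t < a + s then (Real.sqrt s)⁻¹ else 0

/-- The Haar function `h_Q^η` on the cube `Q`. -/
def haar {d : ℕ} (Q : Cube d) (η : Fin d → Bool) : Pt d → ℝ :=
  fun p => ∏ i, haar1 (Q.x i) Q.s (η i) (p i)

/-- A Haar parameter is cancellative iff it is not identically zero. -/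
def cancel {d : ℕ} (η : Fin d → Bool) : Prop := ∃ i, η i = true

/-! ### basic function classes, averages, sparse collections -/

/-- bounded, compactly supported, strongly measurable (the class `L^∞_c`). -/
def BCS {d : ℕ} {X : Type*} [NormedAddCommGroup X] (f : Pt d → X) : Prop :=
  StronglyMeasurable f ∧ (∃ M, ∀ x, ‖f x‖ ≤ M) ∧ HasCompactSupport f

/-- the average `⟨f⟩_Q`. -/
def cubeAvg {d : ℕ} {X : Type*} [NormedAddCommGroup X] [NormedSpace ℝ X]
    (Q : Cube d) (f : Pt d → X) : X :=
  Q.vol⁻¹ • ∫ y in Q.set, f y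

/-- the average `⟨‖f‖_X⟩_Q`, as an extended real. -/
def avgNormE {d : ℕ} {X : Type*} [NormedAddCommGroup X] (Q : Cube d) (f : Pt d → X) : ℝ≥0∞ :=
  (∫⁻ y in Q.set, ENNReal.ofReal ‖f y‖) / ENNReal.ofReal Q.vol

/-- `S` is an `η`-sparse collection of cubes of `D`. -/
def IsSparseIn {d : ℕ} (η : ℝ) (S D : Set (Cube d)) : Prop :=
  S ⊆ D ∧ ∃ E : Cube d → Set (Pt d),
    (∀ Q ∈ S, E Q ⊆ Q.set ∧ ENNReal.ofReal (η * Q.vol) < volume (E Q)) ∧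
    S.PairwiseDisjoint E

/-- `L^p`-norm of an `ℝ≥0∞`-valued function (`0 < p < ∞`). -/
def lpNormE {d : ℕ} (F : Pt d → ℝ≥0∞) (p : ℝ) : ℝ≥0∞ := (∫⁻ x, F x ^ p) ^ p⁻¹

/-- distance between two sets. -/
def setDist {α : Type*} [PseudoEMetricSpace α] (A B : Set α) : ℝ :=
  (⨅ (x ∈ A) (y ∈ B), edist x y).toReal

/-! ### randomized norms -/

/-- `‖(e_k)‖_{Rad(X)} = (E‖∑ ε_k e_k‖²)^{1/2}`. -/
def radNorm {X : Type*} [NormedAddCommGroup X] {K : ℕ} (e : Fin K → X) : ℝ :=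
  Real.sqrt ((∑ ε : Fin K → Bool, ‖∑ k, if ε k then e k else -e k‖ ^ 2) / 2 ^ K)

/-- `‖(e_{l,m})‖_{Rad₂(X)}`, doubly indexed random sums. -/
def rad2Norm {X : Type*} [NormedAddCommGroup X] {N M : ℕ} (e : Fin N → Fin M → X) : ℝ :=
  Real.sqrt ((∑ ε : Fin N → Fin M → Bool, ‖∑ l, ∑ m, if ε l m then e l m else -e l m‖ ^ 2) /
    2 ^ (N * M))

/-- `(E E'‖∑ ε_i ε'_j e_{i,j}‖²)^{1/2}`, two independent families of signs. -/
def radRad {X : Type*} [NormedAddCommGroup X] {N : ℕ} (e : Fin N → Fin N → X) : ℝ :=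
  Real.sqrt ((∑ ε : Fin N → Bool, ∑ δ : Fin N → Bool,
      ‖∑ i, ∑ j, if ε i = δ j then e i j else -e i j‖ ^ 2) / 4 ^ N)

/-- Pisier's property `(α)`. -/
def HasPisierAlpha (X : Type*) [NormedAddCommGroup X] [NormedSpace ℝ X] : Prop :=
  ∃ C : ℝ, ∀ (N : ℕ) (a : Fin N → Fin N → ℝ) (e : Fin N → Fin N → X),
    (∀ i j, |a i j| ≤ 1) → radRad (fun i j => a i j • e i j) ≤ C * radRad e

/-! ### multilinear contractions and RM constants -/

section RM

variable {n : ℕ} {Z : Fin (n + 1) → Type*} [∀ j, NormedAddCommGroup (Z j)]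

/-- `ϖ` is an `(n+1)`-linear contraction. -/
def IsContraction [∀ j, NormedSpace ℂ (Z j)] (ϖ : (∀ j, Z j) → ℂ) : Prop :=
  (∃ Λ : MultilinearMap ℂ Z ℂ, ⇑Λ = ϖ) ∧ ∀ e, ‖ϖ e‖ ≤ ∏ j, ‖e j‖

/-- The `RM_v(ϖ, J)` constant of a finite indexed family `{(e_{j,k})_{j∈J}}_{k=1}^K`:
the supremum of `|∑_k ϖ(e_{1,k},…,e_{n+1,k})|` over all completions of the family with a
fixed unit vector in the slot `v` and Rademacher-normalized sequences elsewhere. -/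
def RMfam (ϖ : (∀ j, Z j) → ℂ) (J : Finset (Fin (n + 1))) (v : Fin (n + 1))
    {K : ℕ} (e : ∀ j ∈ J, Fin K → Z j) : ℝ≥0∞ :=
  ⨆ (g : ∀ j, Fin K → Z j) (_ :
      (∀ j (hj : j ∈ J), g j = e j hj) ∧
      (∃ gv : Z v, (∀ k, g v k = gv) ∧ ‖gv‖ ≤ 1) ∧
      ∀ j, j ∉ J → j ≠ v → radNorm (g j) ≤ 1),
    ENNReal.ofReal ‖∑ k, ϖ fun j => g j k‖

/-- The `RM_v(ϖ, J)` constant of a set `A` of `J`-tuples. -/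
def RMconst (ϖ : (∀ j, Z j) → ℂ) (J : Finset (Fin (n + 1))) (v : Fin (n + 1))
    (A : Set (∀ j ∈ J, Z j)) : ℝ≥0∞ :=
  ⨆ (K : ℕ) (e : ∀ j ∈ J, Fin K → Z j)
    (_ : ∀ k : Fin K, (fun j hj => e j hj k) ∈ A), RMfam ϖ J v e

/-- The `RM'_v(ϖ, J)` constant: as `RMconst`, but with pairwise distinct tuples. -/
def RMconstDistinct (ϖ : (∀ j, Z j) → ℂ) (J : Finset (Fin (n + 1))) (v : Fin (n + 1))
    (A : Set (∀ j ∈ J, Z j)) : ℝ≥0∞ :=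
  ⨆ (K : ℕ) (e : ∀ j ∈ J, Fin K → Z j)
    (_ : (∀ k : Fin K, (fun j hj => e j hj k) ∈ A) ∧
         Function.Injective fun k : Fin K => (fun j hj => e j hj k : ∀ j ∈ J, Z j)),
    RMfam ϖ J v e

/-- The `RM_v(ϖ, J)` constant of a family indexed by `ℕ` (sup of its finite truncations). -/
def RMfamInf (ϖ : (∀ j, Z j) → ℂ) (J : Finset (Fin (n + 1))) (v : Fin (n + 1))
    (e : ∀ j ∈ J, ℕ → Z j) : ℝ≥0∞ :=
  ⨆ K : ℕ, RMfam ϖ J v fun j hj => fun k : Fin K => e j hj k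

/-- The factor appearing in the `R_ϖ`-boundedness condition; for `J = ∅` (the case `n = 2`)
no RM factor appears. -/
def RMfactor (ϖ : (∀ j, Z j) → ℂ) (J : Finset (Fin (n + 1))) (v : Fin (n + 1))
    {K : ℕ} (e : ∀ j ∈ J, Fin K → Z j) : ℝ≥0∞ :=
  if J = ∅ then 1 else RMfam ϖ J v e

/-! ### the Rademacher maximal function and the RMF property -/

variable [∀ j, NormedSpace ℂ (Z j)]

/-- The multilinear Rademacher maximal function `RM_{D,ϖ,J,v}[(f_j)_{j∈J}]`. -/
def RMmax {d : ℕ} (ϖ : (∀ j, Z j) → ℂ) (D : Set (Cube d)) (J : Finset (Fin (n + 1)))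
    (v : Fin (n + 1)) (f : ∀ j ∈ J, Pt d → Z j) (x : Pt d) : ℝ≥0∞ :=
  RMconst ϖ J v {a | ∃ Q ∈ D, x ∈ Q.set ∧ a = fun j hj => cubeAvg Q (f j hj)}

/-- The `RMF_ϖ` property of the tuple `(Z_1, …, Z_{n+1})` relative to the lattice `D`
and the exponents `p`. -/
def HasRMF {d : ℕ} (ϖ : (∀ j, Z j) → ℂ) (D : Set (Cube d)) (p : Fin (n + 1) → ℝ≥0∞) : Prop :=
  ∀ j₁ j₂ : Fin (n + 1), j₁ ≠ j₂ → ∃ v : Fin (n + 1), v ≠ j₁ ∧ v ≠ j₂ ∧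
    ∀ J : Finset (Fin (n + 1)), J.Nonempty → (∀ j ∈ J, j ≠ j₁ ∧ j ≠ j₂ ∧ j ≠ v) →
      ∃ C : ℝ≥0∞, C ≠ ⊤ ∧ ∀ f : ∀ j ∈ J, Pt d → Z j,
        lpNormE (RMmax ϖ D J v f) ((∑ j ∈ J, (p j)⁻¹)⁻¹).toReal ≤
          C * ∏ j ∈ J.attach, eLpNorm (f j.1 j.2) (p j.1) volume

end RM


section AuxSplit
open Finset

private def nu (b : Bool) : ℂ := if b then 1 else -1

private lemma nu_mul_self (b : Bool) : nu b * nu b = 1 := by cases b <;> simp [nu]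

private lemma nu_not (b : Bool) : nu (!b) = - nu b := by cases b <;> simp [nu]

private lemma norm_nu (b : Bool) : ‖nu b‖ = 1 := by cases b <;> simp [nu]

private lemma nu_smul {M : Type*} [AddCommGroup M] [Module ℂ M] (b : Bool) (x : M) :
    nu b • x = if b then x else -x := by
  cases b <;> simp [nu]

private lemma sum_prod_eval {ι β M : Type*} [Fintype ι] [DecidableEq ι] [Fintype β]
    [CommSemiring M] (F : ι → β → M) :
    ∑ ω : ι → β, ∏ j, F j (ω j) = ∏ j, ∑ b, F j b := by
  rw [Finset.prod_univ_sum, Fintype.piFinset_univ]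

private lemma sum_nu_mul {K : ℕ} (a b : Fin K) :
    ∑ u : Fin K → Bool, nu (u a) * nu (u b) = if a = b then (2:ℂ)^K else 0 := by
  have h1 : ∀ u : Fin K → Bool, nu (u a) * nu (u b)
      = ∏ k, ((if k = a then nu (u k) else 1) * (if k = b then nu (u k) else 1)) := by
    intro u
    rw [Finset.prod_mul_distrib, Finset.prod_ite_eq' Finset.univ a (fun k => nu (u k)),
      Finset.prod_ite_eq' Finset.univ b (fun k => nu (u k))]
    simp
  rw [Finset.sum_congr rfl fun u _ => h1 u,
    sum_prod_eval (fun k (x : Bool) => (if k = a then nu x else 1) * (if k = b then nu x else 1))]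
  by_cases hab : a = b
  · subst hab
    rw [if_pos rfl]
    have h2 : ∀ k : Fin K, (∑ x : Bool, (if k = a then nu x else 1) * (if k = a then nu x else 1))
        = (2:ℂ) := by
      intro k
      by_cases hk : k = a <;> simp [hk, Fintype.sum_bool, nu] <;> ring
    rw [Finset.prod_congr rfl fun k _ => h2 k, Finset.prod_const, Finset.card_univ,
      Fintype.card_fin]
  · rw [if_neg hab]
    apply Finset.prod_eq_zero (Finset.mem_univ a)
    simp [if_neg hab, if_neg (Ne.symm hab), Fintype.sum_bool, nu]

private lemma radNorm_nonneg {X : Type*} [NormedAddCommGroup X] {K : ℕ} (e : Fin K → X) :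
    0 ≤ radNorm e := Real.sqrt_nonneg _

private lemma radNorm_eq_nu {X : Type*} [NormedAddCommGroup X] [Module ℂ X] {K : ℕ}
    (e : Fin K → X) :
    radNorm e = Real.sqrt ((∑ u : Fin K → Bool, ‖∑ k, nu (u k) • e k‖ ^ 2) / 2 ^ K) := by
  have h : ∀ u : Fin K → Bool, (∑ k, if u k then e k else -e k) = ∑ k, nu (u k) • e k :=
    fun u => Finset.sum_congr rfl fun k _ => (nu_smul (u k) (e k)).symm
  unfold radNorm
  congr 1
  congr 1
  exact Finset.sum_congr rfl fun u _ => by rw [h u]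

private lemma sum_sq_nu {X : Type*} [NormedAddCommGroup X] [NormedSpace ℂ X] {K : ℕ}
    (e : Fin K → X) :
    ∑ u : Fin K → Bool, ‖∑ k, nu (u k) • e k‖ ^ 2 = 2 ^ K * radNorm e ^ 2 := by
  have h0 : (0:ℝ) ≤ (∑ u : Fin K → Bool, ‖∑ k, nu (u k) • e k‖ ^ 2) / 2 ^ K :=
    div_nonneg (Finset.sum_nonneg fun _ _ => sq_nonneg _) (by positivity)
  rw [radNorm_eq_nu, Real.sq_sqrt h0]
  field_simp

private lemma radNorm_smul {X : Type*} [NormedAddCommGroup X] [NormedSpace ℂ X] {K : ℕ}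
    (c : ℂ) (e : Fin K → X) :
    radNorm (fun k => c • e k) = ‖c‖ * radNorm e := by
  rw [radNorm_eq_nu, radNorm_eq_nu]
  have h1 : ∀ u : Fin K → Bool, ‖∑ k, nu (u k) • c • e k‖ ^ 2
      = ‖c‖^2 * ‖∑ k, nu (u k) • e k‖ ^ 2 := by
    intro u
    have : ∑ k, nu (u k) • c • e k = c • ∑ k, nu (u k) • e k := by
      rw [Finset.smul_sum]
      exact Finset.sum_congr rfl fun k _ => (smul_comm _ _ _)
    rw [this, norm_smul, mul_pow]
  rw [Finset.sum_congr rfl fun u _ => h1 u, ← Finset.mul_sum, mul_div_assoc,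
    Real.sqrt_mul (sq_nonneg _), Real.sqrt_sq (norm_nonneg _)]

private lemma eq_zero_of_radNorm_eq_zero {X : Type*} [NormedAddCommGroup X] [NormedSpace ℂ X]
    {K : ℕ} (e : Fin K → X) (h : radNorm e = 0) : ∀ k, e k = 0 := by
  intro k₀
  rw [radNorm_eq_nu] at h
  have h0 : (∑ u : Fin K → Bool, ‖∑ k, nu (u k) • e k‖ ^ 2) / 2 ^ K = 0 := by
    have h' := Real.sqrt_eq_zero'.mp h
    exact le_antisymm h' (div_nonneg (Finset.sum_nonneg fun _ _ => sq_nonneg _) (by positivity))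
  have hsum : ∑ u : Fin K → Bool, ‖∑ k, nu (u k) • e k‖ ^ 2 = 0 := by
    field_simp at h0
    rwa [mul_zero] at h0
  have hall : ∀ u : Fin K → Bool, (∑ k, nu (u k) • e k) = 0 := by
    intro u
    have := (Finset.sum_eq_zero_iff_of_nonneg (fun u _ => sq_nonneg _)).mp hsum u (Finset.mem_univ u)
    have hn : ‖∑ k, nu (u k) • e k‖ = 0 := by
      have := sq_eq_zero_iff.mp this; exact this
    exact norm_eq_zero.mp hn
  have h1' : ∑ k, e k = 0 := by simpa [nu] using hall (fun _ => true)
  have h2' : ∑ k, (if k = k₀ then -e k else e k) = 0 := by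
    have h2 := hall (fun k => if k = k₀ then false else true)
    rw [← h2]
    refine Finset.sum_congr rfl fun k _ => ?_
    by_cases hk : k = k₀ <;> simp [hk, nu]
  have h3 : (∑ k, e k) - (∑ k, (if k = k₀ then -e k else e k)) = e k₀ + e k₀ := by
    rw [← Finset.sum_sub_distrib]
    have : ∀ k : Fin K, e k - (if k = k₀ then -e k else e k)
        = (if k = k₀ then e k + e k else 0) := by
      intro k
      by_cases hk : k = k₀
      · simp only [hk, if_pos, sub_neg_eq_add, if_true]
      · simp [hk]
    rw [Finset.sum_congr rfl fun k _ => this k, Finset.sum_ite_eq' Finset.univ k₀]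
    simp
  rw [h1', h2', sub_zero] at h3
  have h4 : (2:ℂ) • e k₀ = 0 := by
    rw [two_smul]; exact h3.symm
  have := congrArg (fun x => ((2:ℂ))⁻¹ • x) h4
  simpa [smul_smul] using this


private lemma sum_one_c {K : ℕ} : ∑ _u : Fin K → Bool, (1:ℂ) = (2:ℂ)^K := by
  rw [Finset.sum_const, Finset.card_univ]
  simp [Fintype.card_fun]

private lemma sum_one_r {K : ℕ} : ∑ _u : Fin K → Bool, (1:ℝ) = (2:ℝ)^K := by
  rw [Finset.sum_const, Finset.card_univ]
  simp [Fintype.card_fun]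

private def coefC {ι : Type*} [DecidableEq ι] (v w : ι) (S : Finset ι) {K : ℕ}
    (ω : ι → Fin K → Bool) (j : ι) (k : Fin K) (k₀ : Fin K) : ℂ :=
  if j = v then (if k = k₀ then 1 else 0)
  else if j = w then ∏ t ∈ S, nu (ω t k) else nu (ω j k)

private def Tvec {ι : Type*} [DecidableEq ι] {Z : ι → Type*} [∀ j, NormedAddCommGroup (Z j)]
    [∀ j, NormedSpace ℂ (Z j)] (v w : ι) (S : Finset ι) {K : ℕ}
    (g : ∀ j, Fin K → Z j) (k₀ : Fin K) (ω : ι → Fin K → Bool) (j : ι) : Z j :=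
  ∑ k, coefC v w S ω j k k₀ • g j k

private def Qc {ι : Type*} {K : ℕ} (S : Finset ι) (ω : ι → Fin K → Bool) (k : Fin K) : ℂ :=
  ∏ t ∈ S, nu (ω t k)

private def Psi {ι : Type*} [DecidableEq ι] {K : ℕ} (S : Finset ι) (t₀ : ι)
    (ω : ι → Fin K → Bool) : ι → Fin K → Bool :=
  Function.update ω t₀ (fun k => if Qc (S.erase t₀) ω k = 1 then ω t₀ k else !(ω t₀ k))

private lemma Qc_cases {ι : Type*} {K : ℕ} (S : Finset ι) (ω : ι → Fin K → Bool) (k : Fin K) :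
    Qc S ω k = 1 ∨ Qc S ω k = -1 := by
  apply mul_self_eq_one_iff.mp
  rw [Qc, ← Finset.prod_mul_distrib]
  exact Finset.prod_eq_one fun t _ => nu_mul_self _

private lemma Qc_Psi {ι : Type*} [DecidableEq ι] {K : ℕ} (S : Finset ι) (t₀ : ι)
    (ω : ι → Fin K → Bool) (k : Fin K) :
    Qc (S.erase t₀) (Psi S t₀ ω) k = Qc (S.erase t₀) ω k := by
  refine Finset.prod_congr rfl fun t ht => ?_
  rw [Psi, Function.update_of_ne (Finset.ne_of_mem_erase ht)]

private lemma prod_nu_Psi {ι : Type*} [DecidableEq ι] {K : ℕ} (S : Finset ι) (t₀ : ι)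
    (ht₀ : t₀ ∈ S) (ω : ι → Fin K → Bool) (k : Fin K) :
    ∏ t ∈ S, nu (Psi S t₀ ω t k) = nu (ω t₀ k) := by
  rw [← Finset.mul_prod_erase S _ ht₀]
  have h1 : ∏ t ∈ S.erase t₀, nu (Psi S t₀ ω t k) = Qc (S.erase t₀) ω k := by
    refine Finset.prod_congr rfl fun t ht => ?_
    rw [Psi, Function.update_of_ne (Finset.ne_of_mem_erase ht)]
  rw [h1, Psi, Function.update_self]
  rcases Qc_cases (S.erase t₀) ω k with h | h
  · rw [h, if_pos rfl, mul_one]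
  · rw [h, if_neg (by norm_num : ¬(-1:ℂ) = 1), nu_not]
    ring

private lemma Psi_involutive {ι : Type*} [DecidableEq ι] {K : ℕ} (S : Finset ι) (t₀ : ι) :
    Function.Involutive (Psi (K := K) S t₀) := by
  intro ω
  funext t
  by_cases ht : t = t₀
  · subst ht
    show Function.update (Psi S t ω) t
      (fun k => if Qc (S.erase t) (Psi S t ω) k = 1 then Psi S t ω t k
        else !(Psi S t ω t k)) t = ω t
    rw [Function.update_self]
    funext k
    rw [Qc_Psi]
    have hPt : Psi S t ω t
        = fun k => if Qc (S.erase t) ω k = 1 then ω t k else !(ω t k) :=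
      Function.update_self _ _ _
    rcases Qc_cases (S.erase t) ω k with h | h
    · rw [if_pos h, hPt]
      simp [h]
    · have hne : Qc (S.erase t) ω k ≠ 1 := by rw [h]; norm_num
      rw [if_neg hne, hPt]
      simp [if_neg hne]
  · show Function.update (Psi S t₀ ω) t₀ _ t = ω t
    rw [Function.update_of_ne ht]
    show Function.update ω t₀ _ t = ω t
    rw [Function.update_of_ne ht]

private lemma normA {ι : Type*} [Fintype ι] [DecidableEq ι]
    {Z : ι → Type*} [∀ j, NormedAddCommGroup (Z j)] [∀ j, NormedSpace ℂ (Z j)]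
    (Λ : MultilinearMap ℂ Z ℂ) (hΛ : ∀ e : ∀ j, Z j, ‖Λ e‖ ≤ ∏ j, ‖e j‖)
    (v w : ι) (S : Finset ι) (hvw : v ≠ w) (hvS : v ∉ S) (hwS : w ∉ S)
    (hSne : S.Nonempty) (huniv : insert v (insert w S) = Finset.univ)
    {K : ℕ} (g : ∀ j, Fin K → Z j) (gv : Z v) (hgv : ∀ k, g v k = gv) :
    ‖∑ k, Λ (fun j => g j k)‖ ≤ ‖gv‖ * ∏ j ∈ insert w S, radNorm (g j) := by
  cases K with
  | zero =>
      simp only [Finset.univ_eq_empty, Finset.sum_empty, norm_zero]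
      exact mul_nonneg (norm_nonneg _) (Finset.prod_nonneg fun j _ => radNorm_nonneg _)
  | succ K =>
  obtain ⟨t₀, ht₀⟩ := hSne
  have hvins : v ∉ insert w S := by
    simp only [Finset.mem_insert]
    push_neg
    exact ⟨hvw, hvS⟩
  set k₀ : Fin (K+1) := 0
  -- basic coefficient facts
  have hcv : ∀ (ω : ι → Fin (K+1) → Bool) (k : Fin (K+1)),
      coefC v w S ω v k k₀ = if k = k₀ then 1 else 0 := by
    intro ω k; rw [coefC, if_pos rfl]
  have hcw : ∀ (ω : ι → Fin (K+1) → Bool) (k : Fin (K+1)),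
      coefC v w S ω w k k₀ = ∏ t ∈ S, nu (ω t k) := by
    intro ω k; rw [coefC, if_neg (Ne.symm hvw), if_pos rfl]
  have hcS : ∀ j ∈ S, ∀ (ω : ι → Fin (K+1) → Bool) (k : Fin (K+1)),
      coefC v w S ω j k k₀ = nu (ω j k) := by
    intro j hj ω k
    rw [coefC, if_neg (show ¬ j = v from fun h => hvS (h ▸ hj)),
      if_neg (show ¬ j = w from fun h => hwS (h ▸ hj))]
  -- Step (I): decoupling identity
  have hexp : ∀ ω : ι → Fin (K+1) → Bool, Λ (fun j => Tvec v w S g k₀ ω j)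
      = ∑ κ : ι → Fin (K+1), (∏ j, coefC v w S ω j (κ j) k₀) • Λ (fun j => g j (κ j)) := by
    intro ω
    show Λ (fun j => ∑ k, coefC v w S ω j k k₀ • g j k) = _
    rw [Λ.map_sum]
    exact Finset.sum_congr rfl fun κ _ => Λ.map_smul_univ _ _
  have hW : ∀ κ : ι → Fin (K+1),
      (∑ ω : ι → Fin (K+1) → Bool, ∏ j, coefC v w S ω j (κ j) k₀)
      = if (κ v = k₀ ∧ ∀ j ∈ S, κ w = κ j) then ((2:ℂ)^(K+1))^(Fintype.card ι) else 0 := by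
    intro κ
    have h1 : ∀ ω : ι → Fin (K+1) → Bool, (∏ j, coefC v w S ω j (κ j) k₀)
        = (if κ v = k₀ then 1 else 0) *
          ∏ j, (if j ∈ S then nu (ω j (κ w)) * nu (ω j (κ j)) else 1) := by
      intro ω
      have lhs_eq : (∏ j, coefC v w S ω j (κ j) k₀)
          = (if κ v = k₀ then 1 else 0) *
            ((∏ t ∈ S, nu (ω t (κ w))) * ∏ j ∈ S, nu (ω j (κ j))) := by
        rw [← huniv, Finset.prod_insert hvins, Finset.prod_insert hwS, hcv, hcw]
        rw [Finset.prod_congr rfl (fun j hj => hcS j hj ω (κ j))]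
      rw [lhs_eq, ← Finset.prod_mul_distrib,
        ← Fintype.prod_ite_mem S (fun j => nu (ω j (κ w)) * nu (ω j (κ j)))]
    calc ∑ ω : ι → Fin (K+1) → Bool, ∏ j, coefC v w S ω j (κ j) k₀
        = (if κ v = k₀ then 1 else 0) * ∑ ω : ι → Fin (K+1) → Bool,
            ∏ j, (if j ∈ S then nu (ω j (κ w)) * nu (ω j (κ j)) else 1) := by
          rw [Finset.mul_sum]
          exact Finset.sum_congr rfl fun ω _ => h1 ω
      _ = (if κ v = k₀ then 1 else 0) * ∏ j, ∑ u : Fin (K+1) → Bool,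
            (if j ∈ S then nu (u (κ w)) * nu (u (κ j)) else 1) := by
          rw [sum_prod_eval
            (fun j (u : Fin (K+1) → Bool) => if j ∈ S then nu (u (κ w)) * nu (u (κ j)) else 1)]
      _ = (if κ v = k₀ then 1 else 0) * ∏ j,
            (if j ∈ S then (if κ w = κ j then (2:ℂ)^(K+1) else 0) else (2:ℂ)^(K+1)) := by
          congr 1
          refine Finset.prod_congr rfl fun j _ => ?_
          by_cases hj : j ∈ S
          · rw [if_pos hj, Finset.sum_congr rfl (fun u _ => if_pos hj), sum_nu_mul (κ w) (κ j)]
          · rw [if_neg hj, Finset.sum_congr rfl (fun u _ => if_neg hj), sum_one_c]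
      _ = if (κ v = k₀ ∧ ∀ j ∈ S, κ w = κ j) then ((2:ℂ)^(K+1))^(Fintype.card ι) else 0 := by
          by_cases h0 : κ v = k₀
          · by_cases hall : ∀ j ∈ S, κ w = κ j
            · rw [if_pos h0, one_mul,
                if_pos (show κ v = k₀ ∧ ∀ j ∈ S, κ w = κ j from ⟨h0, hall⟩)]
              have heach : ∀ j : ι, (if j ∈ S then (if κ w = κ j then (2:ℂ)^(K+1) else 0)
                  else (2:ℂ)^(K+1)) = (2:ℂ)^(K+1) := by
                intro j
                by_cases hj : j ∈ S
                · rw [if_pos hj, if_pos (hall j hj)]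
                · rw [if_neg hj]
              rw [Finset.prod_congr rfl (fun j _ => heach j), Finset.prod_const,
                Finset.card_univ]
            · push_neg at hall
              obtain ⟨j₀, hj₀, hne⟩ := hall
              rw [if_pos h0, one_mul,
                if_neg (show ¬(κ v = k₀ ∧ ∀ j ∈ S, κ w = κ j) from
                  fun hc => hne (hc.2 j₀ hj₀)),
                Finset.prod_eq_zero (Finset.mem_univ j₀) (by rw [if_pos hj₀, if_neg hne])]
          · rw [if_neg h0, zero_mul,
              if_neg (show ¬(κ v = k₀ ∧ ∀ j ∈ S, κ w = κ j) from fun hc => h0 hc.1)]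
  have hI : ∑ ω : ι → Fin (K+1) → Bool, Λ (fun j => Tvec v w S g k₀ ω j)
      = (((2:ℂ)^(K+1))^(Fintype.card ι)) • ∑ k : Fin (K+1), Λ (fun j => g j k) := by
    rw [Finset.sum_congr rfl (fun ω _ => hexp ω), Finset.sum_comm, Finset.smul_sum]
    have h2 : ∀ κ : ι → Fin (K+1),
        (∑ ω : ι → Fin (K+1) → Bool, (∏ j, coefC v w S ω j (κ j) k₀) • Λ (fun j => g j (κ j)))
        = (if (κ v = k₀ ∧ ∀ j ∈ S, κ w = κ j)
            then (((2:ℂ)^(K+1))^(Fintype.card ι)) • Λ (fun j => g j (κ j)) else 0) := by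
      intro κ
      rw [← Finset.sum_smul, hW κ, ite_smul, zero_smul]
    rw [Finset.sum_congr rfl fun κ _ => h2 κ, ← Finset.sum_filter]
    have hmemS : ∀ j : ι, j ≠ v → j ≠ w → j ∈ S := by
      intro j h1 h2'
      have hj : j ∈ insert v (insert w S) := huniv ▸ Finset.mem_univ j
      simpa [h1, h2'] using hj
    refine Finset.sum_nbij' (fun κ => κ w) (fun k => fun j => if j = v then k₀ else k)
      ?_ ?_ ?_ ?_ ?_
    · intro κ _; exact Finset.mem_univ _
    · intro k _
      rw [Finset.mem_filter]
      refine ⟨Finset.mem_univ _, show (if v = v then k₀ else k) = k₀ by rw [if_pos rfl],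
        fun j hj => ?_⟩
      show (if w = v then k₀ else k) = (if j = v then k₀ else k)
      rw [if_neg (Ne.symm hvw), if_neg (show ¬ j = v from fun h => hvS (h ▸ hj))]
    · intro κ hκ
      rw [Finset.mem_filter] at hκ
      obtain ⟨-, h0, hall⟩ := hκ
      funext j
      show (if j = v then k₀ else κ w) = κ j
      by_cases hjv : j = v
      · subst hjv; rw [if_pos rfl, h0]
      · rw [if_neg hjv]
        by_cases hjw : j = w
        · subst hjw; rfl
        · exact hall j (hmemS j hjv hjw)
    · intro k _
      show (if w = v then k₀ else k) = k
      rw [if_neg (Ne.symm hvw)]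
    · intro κ hκ
      rw [Finset.mem_filter] at hκ
      obtain ⟨-, h0, hall⟩ := hκ
      have hfun : (fun j => g j (κ j)) = (fun j => g j (κ w)) := by
        funext j
        by_cases hjv : j = v
        · subst hjv
          rw [h0, hgv, hgv]
        · by_cases hjw : j = w
          · subst hjw; rfl
          · rw [hall j (hmemS j hjv hjw)]
      show (((2:ℂ)^(K+1))^(Fintype.card ι)) • Λ (fun j => g j (κ j))
          = (((2:ℂ)^(K+1))^(Fintype.card ι)) • Λ (fun j => g j (κ w))
      rw [hfun]
  -- Step (II): pointwise bound
  have hTv : ∀ ω : ι → Fin (K+1) → Bool, Tvec v w S g k₀ ω v = gv := by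
    intro ω
    show (∑ k, coefC v w S ω v k k₀ • g v k) = gv
    rw [Finset.sum_congr rfl
      (fun k _ => by rw [hcv ω k, ite_smul, one_smul, zero_smul]),
      Finset.sum_ite_eq' Finset.univ k₀ (fun k => g v k)]
    simp [hgv k₀]
  have hII : ∀ ω : ι → Fin (K+1) → Bool, ‖Λ (fun j => Tvec v w S g k₀ ω j)‖
      ≤ ‖gv‖ * ∏ j ∈ insert w S, ‖Tvec v w S g k₀ ω j‖ := by
    intro ω
    refine (hΛ _).trans ?_
    rw [← huniv, Finset.prod_insert hvins, hTv]
  have hTS : ∀ j ∈ S, ∀ ω : ι → Fin (K+1) → Bool,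
      Tvec v w S g k₀ ω j = ∑ k, nu (ω j k) • g j k := by
    intro j hj ω
    exact Finset.sum_congr rfl fun k _ => by rw [hcS j hj ω k]
  have hTw : ∀ ω : ι → Fin (K+1) → Bool,
      Tvec v w S g k₀ ω w = ∑ k, (∏ t ∈ S, nu (ω t k)) • g w k :=
    fun ω => Finset.sum_congr rfl fun k _ => by rw [hcw ω k]
  -- Step (III): averaged bound
  have hA2 : ∑ ω : ι → Fin (K+1) → Bool, (∏ j ∈ S, ‖Tvec v w S g k₀ ω j‖)^2
      = ((2:ℝ)^(K+1))^(Fintype.card ι) * ∏ j ∈ S, radNorm (g j)^2 := by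
    have h1 : ∀ ω : ι → Fin (K+1) → Bool, (∏ j ∈ S, ‖Tvec v w S g k₀ ω j‖)^2
        = ∏ j, (if j ∈ S then ‖∑ k, nu (ω j k) • g j k‖^2 else 1) := by
      intro ω
      rw [← Finset.prod_pow]
      rw [Finset.prod_congr rfl (fun j hj => by rw [hTS j hj ω] :
        ∀ j ∈ S, ‖Tvec v w S g k₀ ω j‖^2 = ‖∑ k, nu (ω j k) • g j k‖^2)]
      exact (Fintype.prod_ite_mem S (fun j => ‖∑ k, nu (ω j k) • g j k‖^2)).symm
    rw [Finset.sum_congr rfl fun ω _ => h1 ω,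
      sum_prod_eval (fun j (u : Fin (K+1) → Bool) =>
        if j ∈ S then ‖∑ k, nu (u k) • g j k‖^2 else 1)]
    have h2 : ∀ j : ι, (∑ u : Fin (K+1) → Bool,
        if j ∈ S then ‖∑ k, nu (u k) • g j k‖^2 else 1)
        = (2:ℝ)^(K+1) * (if j ∈ S then radNorm (g j)^2 else 1) := by
      intro j
      by_cases hj : j ∈ S
      · rw [if_pos hj, Finset.sum_congr rfl (fun u _ => if_pos hj), sum_sq_nu (g j)]
      · rw [if_neg hj, Finset.sum_congr rfl (fun u _ => if_neg hj), sum_one_r, mul_one]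
    rw [Finset.prod_congr rfl (fun j _ => h2 j), Finset.prod_mul_distrib, Finset.prod_const,
      Finset.card_univ, Fintype.prod_ite_mem S (fun j => radNorm (g j)^2)]
  have hB2 : ∑ ω : ι → Fin (K+1) → Bool, ‖Tvec v w S g k₀ ω w‖^2
      = ((2:ℝ)^(K+1))^(Fintype.card ι) * radNorm (g w)^2 := by
    have hbij := (Psi_involutive S t₀ (K := K+1)).bijective
    have hstep : ∑ ω : ι → Fin (K+1) → Bool, ‖Tvec v w S g k₀ ω w‖^2
        = ∑ ω : ι → Fin (K+1) → Bool, ‖∑ k, nu (ω t₀ k) • g w k‖^2 := by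
      rw [← Function.Bijective.sum_comp hbij (fun ω => ‖Tvec v w S g k₀ ω w‖^2)]
      refine Finset.sum_congr rfl fun ω _ => ?_
      rw [hTw (Psi S t₀ ω)]
      congr 1
      congr 1
      refine Finset.sum_congr rfl fun k _ => ?_
      rw [prod_nu_Psi S t₀ ht₀ ω k]
    rw [hstep]
    have h3 : ∀ ω : ι → Fin (K+1) → Bool, ‖∑ k, nu (ω t₀ k) • g w k‖^2
        = ∏ j, (if j = t₀ then ‖∑ k, nu (ω j k) • g w k‖^2 else 1) := by
      intro ω
      rw [Finset.prod_ite_eq' Finset.univ t₀ (fun j => ‖∑ k, nu (ω j k) • g w k‖^2)]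
      simp
    rw [Finset.sum_congr rfl fun ω _ => h3 ω,
      sum_prod_eval (fun j (u : Fin (K+1) → Bool) =>
        if j = t₀ then ‖∑ k, nu (u k) • g w k‖^2 else 1)]
    have h4 : ∀ j : ι, (∑ u : Fin (K+1) → Bool,
        if j = t₀ then ‖∑ k, nu (u k) • g w k‖^2 else 1)
        = (2:ℝ)^(K+1) * (if j = t₀ then radNorm (g w)^2 else 1) := by
      intro j
      by_cases hj : j = t₀
      · rw [if_pos hj, Finset.sum_congr rfl (fun u _ => if_pos hj), sum_sq_nu (g w)]
      · rw [if_neg hj, Finset.sum_congr rfl (fun u _ => if_neg hj), sum_one_r, mul_one]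
    rw [Finset.prod_congr rfl (fun j _ => h4 j), Finset.prod_mul_distrib, Finset.prod_const,
      Finset.card_univ, Finset.prod_ite_eq' Finset.univ t₀ (fun _ => radNorm (g w)^2)]
    simp
  have hCS : ∑ ω : ι → Fin (K+1) → Bool, ∏ j ∈ insert w S, ‖Tvec v w S g k₀ ω j‖
      ≤ ((2:ℝ)^(K+1))^(Fintype.card ι) * ∏ j ∈ insert w S, radNorm (g j) := by
    have hsplit : ∀ ω : ι → Fin (K+1) → Bool, ∏ j ∈ insert w S, ‖Tvec v w S g k₀ ω j‖
        = ‖Tvec v w S g k₀ ω w‖ * ∏ j ∈ S, ‖Tvec v w S g k₀ ω j‖ :=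
      fun ω => Finset.prod_insert hwS
    have hX0 : (0:ℝ) ≤ ∑ ω : ι → Fin (K+1) → Bool,
        ‖Tvec v w S g k₀ ω w‖ * ∏ j ∈ S, ‖Tvec v w S g k₀ ω j‖ :=
      Finset.sum_nonneg fun ω _ => mul_nonneg (norm_nonneg _)
        (Finset.prod_nonneg fun j _ => norm_nonneg _)
    have hcs := Finset.sum_mul_sq_le_sq_mul_sq Finset.univ
      (fun ω : ι → Fin (K+1) → Bool => ‖Tvec v w S g k₀ ω w‖)
      (fun ω => ∏ j ∈ S, ‖Tvec v w S g k₀ ω j‖)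
    rw [Finset.sum_congr rfl fun ω _ => hsplit ω]
    have heq : (∑ ω : ι → Fin (K+1) → Bool, ‖Tvec v w S g k₀ ω w‖^2) *
        (∑ ω : ι → Fin (K+1) → Bool, (∏ j ∈ S, ‖Tvec v w S g k₀ ω j‖)^2)
        = (((2:ℝ)^(K+1))^(Fintype.card ι) * ∏ j ∈ insert w S, radNorm (g j))^2 := by
      rw [hA2, hB2, Finset.prod_insert hwS]
      have : ∏ j ∈ S, radNorm (g j)^2 = (∏ j ∈ S, radNorm (g j))^2 :=
        Finset.prod_pow S 2 (fun j => radNorm (g j))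
      rw [this]
      ring
    calc ∑ ω : ι → Fin (K+1) → Bool,
          ‖Tvec v w S g k₀ ω w‖ * ∏ j ∈ S, ‖Tvec v w S g k₀ ω j‖
        = Real.sqrt ((∑ ω : ι → Fin (K+1) → Bool,
            ‖Tvec v w S g k₀ ω w‖ * ∏ j ∈ S, ‖Tvec v w S g k₀ ω j‖)^2) :=
          (Real.sqrt_sq hX0).symm
      _ ≤ Real.sqrt ((∑ ω : ι → Fin (K+1) → Bool, ‖Tvec v w S g k₀ ω w‖^2) *
            (∑ ω : ι → Fin (K+1) → Bool, (∏ j ∈ S, ‖Tvec v w S g k₀ ω j‖)^2)) :=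
          Real.sqrt_le_sqrt hcs
      _ = ((2:ℝ)^(K+1))^(Fintype.card ι) * ∏ j ∈ insert w S, radNorm (g j) := by
          rw [heq]
          exact Real.sqrt_sq (mul_nonneg (by positivity)
            (Finset.prod_nonneg fun j _ => radNorm_nonneg _))
  -- assembly
  have hNpos : (0:ℝ) < ((2:ℝ)^(K+1))^(Fintype.card ι) := by positivity
  have hnormN : ‖(((2:ℂ)^(K+1))^(Fintype.card ι))‖ = ((2:ℝ)^(K+1))^(Fintype.card ι) := by
    rw [norm_pow, norm_pow]
    norm_num
  have key : ((2:ℝ)^(K+1))^(Fintype.card ι) * ‖∑ k, Λ (fun j => g j k)‖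
      ≤ ((2:ℝ)^(K+1))^(Fintype.card ι) * (‖gv‖ * ∏ j ∈ insert w S, radNorm (g j)) := by
    calc ((2:ℝ)^(K+1))^(Fintype.card ι) * ‖∑ k, Λ (fun j => g j k)‖
        = ‖(((2:ℂ)^(K+1))^(Fintype.card ι)) • ∑ k : Fin (K+1), Λ (fun j => g j k)‖ := by
          rw [norm_smul, hnormN]
      _ = ‖∑ ω : ι → Fin (K+1) → Bool, Λ (fun j => Tvec v w S g k₀ ω j)‖ := by rw [hI]
      _ ≤ ∑ ω : ι → Fin (K+1) → Bool, ‖Λ (fun j => Tvec v w S g k₀ ω j)‖ :=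
          norm_sum_le _ _
      _ ≤ ∑ ω : ι → Fin (K+1) → Bool, ‖gv‖ * ∏ j ∈ insert w S, ‖Tvec v w S g k₀ ω j‖ :=
          Finset.sum_le_sum fun ω _ => hII ω
      _ = ‖gv‖ * ∑ ω : ι → Fin (K+1) → Bool, ∏ j ∈ insert w S, ‖Tvec v w S g k₀ ω j‖ := by
          rw [Finset.mul_sum]
      _ ≤ ‖gv‖ * (((2:ℝ)^(K+1))^(Fintype.card ι) * ∏ j ∈ insert w S, radNorm (g j)) :=
          mul_le_mul_of_nonneg_left hCS (norm_nonneg _)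
      _ = ((2:ℝ)^(K+1))^(Fintype.card ι) * (‖gv‖ * ∏ j ∈ insert w S, radNorm (g j)) := by
          ring
  exact le_of_mul_le_mul_left key hNpos


end AuxSplit

/-- splitting inequality for RM constants. -/
theorem RMfam_splitting {n : ℕ} (hn : 3 ≤ n)
    (Z : Fin (n + 1) → Type u) [∀ j, NormedAddCommGroup (Z j)] [∀ j, NormedSpace ℂ (Z j)]
    (ϖ : (∀ j, Z j) → ℂ) (hϖ : IsContraction ϖ)
    (J J₀ J₁ : Finset (Fin (n + 1))) (hJ1 : 1 ≤ J.card) (hJ2 : J.card ≤ n - 2)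
    (hJ : J = J₀ ∪ J₁) (hdisj : Disjoint J₀ J₁) (hJone : J₁.Nonempty)
    (v : Fin (n + 1)) (hv : v ∉ J)
    (K : ℕ) (e : ∀ j ∈ J, Fin K → Z j) :
    (J₀.Nonempty →
      RMfam ϖ J v e ≤
        RMfam ϖ J₀ v (fun j hj => e j (by rw [hJ]; exact Finset.mem_union_left _ hj)) *
          ∏ j ∈ J₁.attach,
            ENNReal.ofReal (radNorm (e j.1
              (by rw [hJ]; exact Finset.mem_union_right _ j.2)))) ∧
    (J₀ = ∅ →
      RMfam ϖ J v e ≤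
        ∏ j ∈ J₁.attach,
          ENNReal.ofReal (radNorm (e j.1
            (by rw [hJ]; exact Finset.mem_union_right _ j.2)))) := by
  classical
  obtain ⟨Λ, hΛeq⟩ := hϖ.1
  have hbd : ∀ e' : ∀ j, Z j, ‖Λ e'‖ ≤ ∏ j, ‖e' j‖ := by
    intro e'
    have h := hϖ.2 e'
    rw [← hΛeq] at h
    exact h
  have hJ₁J : ∀ {j : Fin (n+1)}, j ∈ J₁ → j ∈ J := by
    intro j h; rw [hJ]; exact Finset.mem_union_right _ h
  constructor
  · -- case `J₀` nonempty : rescaling argument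
    intro _hJ₀ne
    refine iSup₂_le fun g hg => ?_
    obtain ⟨hge, ⟨gv, hgv, hgvle⟩, hgrad⟩ := hg
    by_cases hzero : ∃ j, ∃ h : j ∈ J₁, radNorm (e j (hJ₁J h)) = 0
    · obtain ⟨j₀, hj₀, hrz⟩ := hzero
      have hz : ∀ k, g j₀ k = 0 := by
        intro k
        rw [hge j₀ (hJ₁J hj₀)]
        exact eq_zero_of_radNorm_eq_zero _ hrz k
      have hzv : ∀ k : Fin K, ϖ (fun j => g j k) = 0 := by
        intro k
        rw [← hΛeq]
        exact Λ.map_coord_zero j₀ (hz k)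
      rw [Finset.sum_congr rfl fun k _ => hzv k]
      simp
    · push_neg at hzero
      set rP : ℝ := ∏ j ∈ J₁.attach, radNorm (e j.1 (hJ₁J j.2)) with hrPdef
      set c : Fin (n+1) → ℂ := fun j =>
        if h : j ∈ J₁ then (((radNorm (e j (hJ₁J h)) : ℝ)) : ℂ)⁻¹ else 1 with hc
      set g' : ∀ j, Fin K → Z j := fun j k => if j ∈ J₁ then c j • g j k else g j k with hg'
      have hrPpos : (0:ℝ) < rP := by
        rw [hrPdef]
        exact Finset.prod_pos fun j _ =>
          lt_of_le_of_ne (radNorm_nonneg _) (Ne.symm (hzero j.1 j.2))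
      have hLam : ∀ k : Fin K, ϖ (fun j => g' j k)
          = (∏ j ∈ J₁, c j) • ϖ (fun j => g j k) := by
        intro k
        have hpw : (fun j => g' j k)
            = J₁.piecewise (fun j => c j • g j k) (fun j => g j k) := by
          funext j
          simp [hg', Finset.piecewise]
        rw [← hΛeq, hpw, Λ.map_piecewise_smul]
      have hsum : ∑ k : Fin K, ϖ (fun j => g' j k)
          = (∏ j ∈ J₁, c j) • ∑ k : Fin K, ϖ (fun j => g j k) := by
        rw [Finset.smul_sum]
        exact Finset.sum_congr rfl fun k _ => hLam k
      have hcrP : (∏ j ∈ J₁, c j) = ((rP : ℝ) : ℂ)⁻¹ := by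
        rw [← Finset.prod_attach J₁ (fun j => c j)]
        have heach : ∀ j : {x // x ∈ J₁},
            c j.1 = (((radNorm (e j.1 (hJ₁J j.2)) : ℝ)) : ℂ)⁻¹ := by
          intro j
          rw [hc]
          exact dif_pos j.2
        rw [Finset.prod_congr rfl fun j _ => heach j, Finset.prod_inv_distrib,
          hrPdef, Complex.ofReal_prod]
      have hnz : ((rP : ℝ) : ℂ) ≠ 0 := by exact_mod_cast ne_of_gt hrPpos
      have hback : ∑ k : Fin K, ϖ (fun j => g j k)
          = ((rP:ℝ):ℂ) • ∑ k : Fin K, ϖ (fun j => g' j k) := by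
        rw [hsum, hcrP, smul_smul, mul_inv_cancel₀ hnz, one_smul]
      have hnorm : ‖∑ k : Fin K, ϖ (fun j => g j k)‖
          = rP * ‖∑ k : Fin K, ϖ (fun j => g' j k)‖ := by
        rw [hback, norm_smul, Complex.norm_real, Real.norm_eq_abs, abs_of_pos hrPpos]
      have hvJ₁ : v ∉ J₁ := fun h => hv (hJ₁J h)
      have hcond : (∀ j (hj : j ∈ J₀),
            g' j = e j (by rw [hJ]; exact Finset.mem_union_left _ hj)) ∧
          (∃ gv' : Z v, (∀ k, g' v k = gv') ∧ ‖gv'‖ ≤ 1) ∧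
          (∀ j, j ∉ J₀ → j ≠ v → radNorm (g' j) ≤ 1) := by
        refine ⟨?_, ⟨gv, ?_, hgvle⟩, ?_⟩
        · intro j hj
          have hjJ₁ : j ∉ J₁ := Finset.disjoint_left.mp hdisj hj
          funext k
          show (if j ∈ J₁ then c j • g j k else g j k) = _
          rw [if_neg hjJ₁]
          exact congrFun (hge j (by rw [hJ]; exact Finset.mem_union_left _ hj)) k
        · intro k
          show (if v ∈ J₁ then c v • g v k else g v k) = gv
          rw [if_neg hvJ₁]
          exact hgv k
        · intro j hj0 hjv
          by_cases hj1 : j ∈ J₁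
          · have hgj : g' j = fun k => c j • g j k := by
              funext k
              show (if j ∈ J₁ then c j • g j k else g j k) = _
              rw [if_pos hj1]
            have hgje : g j = e j (hJ₁J hj1) := hge j (hJ₁J hj1)
            rw [hgj, radNorm_smul, hgje]
            have hcj : ‖c j‖ = (radNorm (e j (hJ₁J hj1)))⁻¹ := by
              have hcval : c j = (((radNorm (e j (hJ₁J hj1)) : ℝ)) : ℂ)⁻¹ := by
                rw [hc]; exact dif_pos hj1
              rw [hcval, norm_inv, Complex.norm_real, Real.norm_eq_abs,
                abs_of_pos (lt_of_le_of_ne (radNorm_nonneg _) (Ne.symm (hzero j hj1)))]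
            rw [hcj, inv_mul_cancel₀ (hzero j hj1)]
          · have hgj : g' j = g j := by
              funext k
              show (if j ∈ J₁ then c j • g j k else g j k) = _
              rw [if_neg hj1]
            rw [hgj]
            refine hgrad j (fun hjJ => ?_) hjv
            rw [hJ] at hjJ
            rcases Finset.mem_union.mp hjJ with h | h
            · exact hj0 h
            · exact hj1 h
      have hle' : ENNReal.ofReal ‖∑ k, ϖ fun j => g' j k‖
          ≤ RMfam ϖ J₀ v (fun j hj => e j (by rw [hJ]; exact Finset.mem_union_left _ hj)) :=
        le_iSup₂_of_le g' hcond le_rfl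
      calc ENNReal.ofReal ‖∑ k, ϖ fun j => g j k‖
          = ENNReal.ofReal (rP * ‖∑ k, ϖ fun j => g' j k‖) := by rw [hnorm]
        _ = ENNReal.ofReal rP * ENNReal.ofReal ‖∑ k, ϖ fun j => g' j k‖ :=
            ENNReal.ofReal_mul (le_of_lt hrPpos)
        _ ≤ ENNReal.ofReal rP *
              RMfam ϖ J₀ v (fun j hj => e j (by rw [hJ]; exact Finset.mem_union_left _ hj)) :=
            mul_le_mul_right hle' _
        _ = RMfam ϖ J₀ v (fun j hj => e j (by rw [hJ]; exact Finset.mem_union_left _ hj)) *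
              ENNReal.ofReal rP := mul_comm _ _
        _ = RMfam ϖ J₀ v (fun j hj => e j (by rw [hJ]; exact Finset.mem_union_left _ hj)) *
              ∏ j ∈ J₁.attach, ENNReal.ofReal (radNorm (e j.1
                (by rw [hJ]; exact Finset.mem_union_right _ j.2))) := by
            congr 1
            rw [hrPdef, ENNReal.ofReal_prod_of_nonneg fun j _ => radNorm_nonneg _]
  · -- case `J₀ = ∅` : direct decoupling estimate
    intro hJ₀empty
    have hJJ₁ : J = J₁ := by rw [hJ, hJ₀empty, Finset.empty_union]
    refine iSup₂_le fun g hg => ?_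
    obtain ⟨hge, ⟨gv, hgv, hgvle⟩, hgrad⟩ := hg
    have hlt : 1 < Fintype.card (Fin (n+1)) := by rw [Fintype.card_fin]; omega
    have hnt : Nontrivial (Fin (n+1)) := Fintype.one_lt_card_iff_nontrivial.mp hlt
    obtain ⟨w, hwv⟩ := exists_ne v
    set S : Finset (Fin (n+1)) := (Finset.univ.erase v).erase w with hS
    have hvS : v ∉ S := fun h => (Finset.mem_erase.mp (Finset.mem_erase.mp h).2).1 rfl
    have hwS : w ∉ S := fun h => (Finset.mem_erase.mp h).1 rfl
    have hwmem : w ∈ Finset.univ.erase v :=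
      Finset.mem_erase_of_ne_of_mem hwv (Finset.mem_univ w)
    have hins : insert w S = Finset.univ.erase v := by
      rw [hS, Finset.insert_erase hwmem]
    have huniv : insert v (insert w S) = Finset.univ := by
      rw [hins, Finset.insert_erase (Finset.mem_univ v)]
    have hScard : S.card = n - 1 := by
      rw [hS, Finset.card_erase_of_mem hwmem, Finset.card_erase_of_mem (Finset.mem_univ v),
        Finset.card_univ, Fintype.card_fin]
      omega
    have hSne : S.Nonempty := by
      rw [← Finset.card_pos, hScard]; omega
    have key := normA Λ hbd v w S (Ne.symm hwv) hvS hwS hSne huniv g gv hgv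
    have hJ₁sub : J₁ ⊆ insert w S := by
      rw [hins]
      intro j hj
      exact Finset.mem_erase_of_ne_of_mem (fun h => hv (h ▸ hJ₁J hj)) (Finset.mem_univ j)
    have hprod : ∏ j ∈ insert w S, radNorm (g j)
        ≤ ∏ j ∈ J₁.attach, radNorm (e j.1 (hJ₁J j.2)) := by
      have h1 : ∏ j ∈ insert w S, radNorm (g j)
          = (∏ j ∈ (insert w S) \ J₁, radNorm (g j)) * ∏ j ∈ J₁, radNorm (g j) :=
        (Finset.prod_sdiff hJ₁sub).symm
      have h2 : ∏ j ∈ (insert w S) \ J₁, radNorm (g j) ≤ 1 := by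
        refine Finset.prod_le_one (fun j _ => radNorm_nonneg _) ?_
        intro j hj
        obtain ⟨hjin, hjn1⟩ := Finset.mem_sdiff.mp hj
        have hjv : j ≠ v := by
          rw [hins] at hjin
          exact (Finset.mem_erase.mp hjin).1
        exact hgrad j (fun hjJ => hjn1 (hJJ₁ ▸ hjJ)) hjv
      have h3 : ∏ j ∈ J₁, radNorm (g j)
          = ∏ j ∈ J₁.attach, radNorm (e j.1 (hJ₁J j.2)) := by
        rw [← Finset.prod_attach J₁ (fun j => radNorm (g j))]
        refine Finset.prod_congr rfl fun j _ => ?_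
        rw [hge j.1 (hJ₁J j.2)]
      rw [h1, h3]
      calc (∏ j ∈ (insert w S) \ J₁, radNorm (g j)) *
            ∏ j ∈ J₁.attach, radNorm (e j.1 (hJ₁J j.2))
          ≤ 1 * ∏ j ∈ J₁.attach, radNorm (e j.1 (hJ₁J j.2)) :=
            mul_le_mul_of_nonneg_right h2
              (Finset.prod_nonneg fun j _ => radNorm_nonneg _)
        _ = ∏ j ∈ J₁.attach, radNorm (e j.1 (hJ₁J j.2)) := one_mul _
    rw [← hΛeq]
    calc ENNReal.ofReal ‖∑ k, Λ fun j => g j k‖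
        ≤ ENNReal.ofReal (‖gv‖ * ∏ j ∈ insert w S, radNorm (g j)) :=
          ENNReal.ofReal_le_ofReal key
      _ ≤ ENNReal.ofReal (∏ j ∈ J₁.attach, radNorm (e j.1 (hJ₁J j.2))) := by
          refine ENNReal.ofReal_le_ofReal ?_
          calc ‖gv‖ * ∏ j ∈ insert w S, radNorm (g j)
              ≤ 1 * ∏ j ∈ J₁.attach, radNorm (e j.1 (hJ₁J j.2)) :=
                mul_le_mul hgvle hprod
                  (Finset.prod_nonneg fun j _ => radNorm_nonneg _) zero_le_one
            _ = _ := one_mul _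
      _ = ∏ j ∈ J₁.attach, ENNReal.ofReal (radNorm (e j.1 (hJ₁J j.2))) :=
          ENNReal.ofReal_prod_of_nonneg fun j _ => radNorm_nonneg _


end OVM
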